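/- Let q be a power of a prime p, let n, m be positive integers with n | m, and let σ : x ↦ x^{q^s} with gcd(s,m)=1. Let 𝒞 be a set of σ-linearized polynomials over F_{q^m}, let β ∈ F_{q^m}^*, let α_1,…,α_n be an F_q-basis of βF_{q^n}, let C = {(g(α_1),…,g(α_n)) : g ∈ 𝒞} ⊆ F_{q^m}^n, and let d be its minimum rank distance. Suppose there is a positive integer t such that: (1) n−d+1 ≤ t ≤ n−⌊(d−1)/2⌋−1; (2) t−1 is a power of p; (3) n = t(t−1) + 1; (4) { a x^{σ^j} + b x^{σ^{j+1}} : a, b ∈ F_{q^m} } ⊆ 𝒞 for some integer j with 0 ≤ j < n−t. Then there exists a word w ∈ F_{q^m}^n ∖ C such that |C ∩ B_{n−t}(w)| ≥ (q^n−1)/(q−1). -/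

import Mathlib

open Finset in
private lemma aux_dvd_q_sub_one {q a b D : ℕ} (hq : 2 ≤ q) (ha : 0 < a)
    (hab : Nat.gcd a b = 1) (hDa : D ∣ q ^ a - 1) (hDb : D ∣ q ^ b - 1) : D ∣ q - 1 := by
  have hq1 : ∀ c : ℕ, 1 ≤ q ^ c := fun c => Nat.one_le_pow _ _ (by omega)
  have hD0 : D ≠ 0 := by
    rintro rfl
    have h1 := Nat.eq_zero_of_zero_dvd hDa
    have h2 : 2 ^ 1 ≤ q ^ a := Nat.pow_le_pow_left hq a |>.trans' (Nat.pow_le_pow_right (by omega) ha)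
    omega
  haveI : NeZero D := ⟨hD0⟩
  have key : ∀ c : ℕ, D ∣ q ^ c - 1 → (q : ZMod D) ^ c = 1 := by
    intro c hc
    have h := (ZMod.natCast_eq_zero_iff (q ^ c - 1) D).2 hc
    rw [Nat.cast_sub (hq1 c)] at h
    push_cast at h
    rw [sub_eq_zero] at h
    exact h
  have o1 : orderOf (q : ZMod D) ∣ a := orderOf_dvd_of_pow_eq_one (key a hDa)
  have o2 : orderOf (q : ZMod D) ∣ b := orderOf_dvd_of_pow_eq_one (key b hDb)
  have h1 : orderOf (q : ZMod D) ∣ 1 := hab ▸ Nat.dvd_gcd o1 o2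
  have hq' : (q : ZMod D) = 1 := orderOf_eq_one_iff.1 (Nat.dvd_one.1 h1)
  have : ((q - 1 : ℕ) : ZMod D) = 0 := by
    rw [Nat.cast_sub (by omega)]
    push_cast
    rw [hq', sub_self]
  exact (ZMod.natCast_eq_zero_iff _ _).1 this

open Finset in
private lemma ore_decomp {K : Type} [Field K] (Q : ℕ)
    (hfrob : ∀ (i : ℕ) (x y : K), (x + y) ^ Q ^ i = x ^ Q ^ i + y ^ Q ^ i) :
    ∀ (k : ℕ) (c : K) (a : ℕ → K), ∃ b : ℕ → K, b k = a (k+1) ∧ ∃ r : K,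
      ∀ x : K, ∑ i ∈ Finset.range (k+2), a i * x ^ Q ^ i
        = (∑ i ∈ Finset.range (k+1), b i * (x ^ Q - c * x) ^ Q ^ i) + r * x := by
  have hsub : ∀ (i : ℕ) (x y : K), (x - y) ^ Q ^ i = x ^ Q ^ i - y ^ Q ^ i := by
    intro i x y
    have := hfrob i (x - y) y
    rw [sub_add_cancel] at this
    rw [this]; ring
  have hkey : ∀ (i : ℕ) (c x : K), (x ^ Q - c * x) ^ Q ^ i
      = x ^ Q ^ (i+1) - c ^ Q ^ i * x ^ Q ^ i := by
    intro i c x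
    rw [hsub i, mul_pow, ← pow_mul, ← pow_succ']
  intro k
  induction k with
  | zero =>
    intro c a
    refine ⟨fun _ => a 1, rfl, a 0 + a 1 * c, fun x => ?_⟩
    simp only [Finset.sum_range_succ, Finset.sum_range_zero, pow_zero, pow_one]
    ring
  | succ k IH =>
    intro c a
    obtain ⟨b', hb'top, r', hb'⟩ :=
      IH c (Function.update a (k+1) (a (k+1) + a (k+2) * c ^ Q ^ (k+1)))
    refine ⟨Function.update b' (k+1) (a (k+2)), Function.update_self _ _ _, r', fun x => ?_⟩
    have ha' : ∑ i ∈ Finset.range (k+2), (Function.update a (k+1)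
        (a (k+1) + a (k+2) * c ^ Q ^ (k+1))) i * x ^ Q ^ i
        = (∑ i ∈ Finset.range (k+1), a i * x ^ Q ^ i)
          + (a (k+1) + a (k+2) * c ^ Q ^ (k+1)) * x ^ Q ^ (k+1) := by
      rw [Finset.sum_range_succ, Function.update_self]
      congr 1
      apply Finset.sum_congr rfl
      intro i hi
      rw [Function.update_of_ne (by simp at hi; omega)]
    have hb'' : ∑ i ∈ Finset.range (k+2), (Function.update b' (k+1) (a (k+2))) i
        * (x ^ Q - c * x) ^ Q ^ i
        = (∑ i ∈ Finset.range (k+1), b' i * (x ^ Q - c * x) ^ Q ^ i)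
          + a (k+2) * (x ^ Q - c * x) ^ Q ^ (k+1) := by
      rw [Finset.sum_range_succ, Function.update_self]
      congr 1
      apply Finset.sum_congr rfl
      intro i hi
      rw [Function.update_of_ne (by simp at hi; omega)]
    have lhs : ∑ i ∈ Finset.range (k+3), a i * x ^ Q ^ i
        = (∑ i ∈ Finset.range (k+1), a i * x ^ Q ^ i) + a (k+1) * x ^ Q ^ (k+1)
          + a (k+2) * x ^ Q ^ (k+2) := by
      rw [Finset.sum_range_succ, Finset.sum_range_succ]
    rw [lhs, hb'', hkey (k+1) c x]
    have := hb' x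
    rw [ha'] at this
    linear_combination this

open Finset in
open scoped Classical in
private lemma ore_bound {K : Type} [Field K] [Fintype K] [DecidableEq K] (q Q : ℕ)
    (hq : 2 ≤ q) (hQ : 1 ≤ Q)
    (hfrob : ∀ (i : ℕ) (x y : K), (x + y) ^ Q ^ i = x ^ Q ^ i + y ^ Q ^ i)
    (F : Subfield K)
    (hFpow : ∀ x ∈ F, x ^ Q ∈ F)
    (hfix : (Finset.univ.filter (fun z : K => z ∈ F ∧ z ^ Q = z)).card ≤ q) :
    ∀ (k : ℕ) (a : ℕ → K), a k ≠ 0 →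
      (Finset.univ.filter (fun x : K => x ∈ F ∧
        ∑ i ∈ Finset.range (k+1), a i * x ^ Q ^ i = 0)).card ≤ q ^ k := by
  intro k
  induction k with
  | zero =>
    intro a ha
    have : (Finset.univ.filter (fun x : K => x ∈ F ∧
        ∑ i ∈ Finset.range 1, a i * x ^ Q ^ i = 0)) ⊆ {0} := by
      intro x hx
      simp only [Finset.mem_filter, Finset.mem_univ, true_and, Finset.sum_range_one,
        pow_zero, pow_one] at hx ⊢
      rcases hx with ⟨-, hx⟩
      simp only [Finset.mem_singleton]
      exact (mul_eq_zero.1 hx).resolve_left ha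
    calc _ ≤ ({0} : Finset K).card := Finset.card_le_card this
    _ = 1 := Finset.card_singleton _
    _ ≤ q ^ 0 := by norm_num
  | succ k IH =>
    intro a ha
    set S := Finset.univ.filter (fun x : K => x ∈ F ∧
        ∑ i ∈ Finset.range (k+2), a i * x ^ Q ^ i = 0) with hS
    by_cases hSsub : S ⊆ {0}
    · calc S.card ≤ ({0} : Finset K).card := Finset.card_le_card hSsub
      _ = 1 := Finset.card_singleton _
      _ ≤ q ^ (k+1) := Nat.one_le_pow _ _ (by omega)
    · obtain ⟨u, huS, hu0⟩ : ∃ u ∈ S, u ≠ 0 := by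
        rw [Finset.not_subset] at hSsub
        obtain ⟨u, h1, h2⟩ := hSsub
        exact ⟨u, h1, by simpa using h2⟩
      have huF : u ∈ F := by simp only [hS, Finset.mem_filter] at huS; exact huS.2.1
      have huL : ∑ i ∈ Finset.range (k+2), a i * u ^ Q ^ i = 0 := by
        simp only [hS, Finset.mem_filter] at huS; exact huS.2.2
      set c : K := u ^ Q * u⁻¹ with hc
      have hcF : c ∈ F := F.mul_mem (hFpow u huF) (F.inv_mem huF)
      obtain ⟨b, hbtop, r, hdec⟩ := ore_decomp Q hfrob k c a
      have hψu : u ^ Q - c * u = 0 := by rw [hc]; field_simp; simp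
      have hr : r = 0 := by
        have := hdec u
        rw [huL, hψu] at this
        have hz : ∀ i ∈ Finset.range (k+1), b i * (0:K) ^ Q ^ i = 0 := by
          intro i _
          rw [zero_pow (by positivity), mul_zero]
        rw [Finset.sum_congr rfl hz, Finset.sum_const_zero, zero_add] at this
        rcases mul_eq_zero.1 this.symm with h | h
        · exact h
        · exact absurd h hu0
      have hLM : ∀ x : K, ∑ i ∈ Finset.range (k+2), a i * x ^ Q ^ i
          = ∑ i ∈ Finset.range (k+1), b i * (x ^ Q - c * x) ^ Q ^ i := by
        intro x; rw [hdec x, hr, zero_mul, add_zero]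
      set S' := Finset.univ.filter (fun x : K => x ∈ F ∧
          ∑ i ∈ Finset.range (k+1), b i * x ^ Q ^ i = 0) with hS'
      have hIH : S'.card ≤ q ^ k := IH b (hbtop ▸ ha)
      set ψ : K → K := fun x => x ^ Q - c * x with hψ
      have hmaps : ∀ x ∈ S, ψ x ∈ S' := by
        intro x hx
        simp only [hS, Finset.mem_filter, Finset.mem_univ, true_and] at hx
        simp only [hS', Finset.mem_filter, Finset.mem_univ, true_and]
        constructor
        · exact F.sub_mem (hFpow x hx.1) (F.mul_mem hcF hx.1)
        · rw [← hLM x]; exact hx.2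
      -- fibers have size ≤ q
      have hfib : ∀ y ∈ S.image ψ, (S.filter (fun x => ψ x = y)).card ≤ q := by
        intro y hy
        rcases Finset.eq_empty_or_nonempty (S.filter (fun x => ψ x = y)) with he | ⟨x₁, hx₁⟩
        · rw [he]; simp
        · have hx₁S : x₁ ∈ S := (Finset.mem_filter.1 hx₁).1
          have hx₁F : x₁ ∈ F := by
            simp only [hS, Finset.mem_filter] at hx₁S; exact hx₁S.2.1
          have hx₁ψ : ψ x₁ = y := (Finset.mem_filter.1 hx₁).2
          calc (S.filter (fun x => ψ x = y)).card
              ≤ (Finset.univ.filter (fun z : K => z ∈ F ∧ z ^ Q = z)).card := by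
                apply Finset.card_le_card_of_injOn (fun x' => (x₁ - x') * u⁻¹)
                · intro x' hx'
                  have hx'S : x' ∈ S := (Finset.mem_filter.1 hx').1
                  have hx'F : x' ∈ F := by
                    simp only [hS, Finset.mem_filter] at hx'S; exact hx'S.2.1
                  have hx'ψ : ψ x' = y := (Finset.mem_filter.1 hx').2
                  simp only [Finset.mem_coe, Finset.mem_filter, Finset.mem_univ, true_and]
                  constructor
                  · exact F.mul_mem (F.sub_mem hx₁F hx'F) (F.inv_mem huF)
                  · -- ((x₁ - x')u⁻¹)^Q = (x₁-x')u⁻¹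
                    have hδ : (x₁ - x') ^ Q = c * (x₁ - x') := by
                      have h1 : x₁ ^ Q - c * x₁ = x' ^ Q - c * x' := by
                        show ψ x₁ = ψ x'
                        rw [hx₁ψ, hx'ψ]
                      have h2 : (x₁ - x') ^ Q = x₁ ^ Q - x' ^ Q := by
                        have := hfrob 1 (x₁ - x') x'
                        rw [sub_add_cancel] at this
                        rw [pow_one] at this
                        rw [this]; ring
                      rw [h2]; linear_combination h1
                    have huQ : u ^ Q ≠ 0 := pow_ne_zero _ hu0
                    rw [mul_pow, hδ, hc]
                    field_simp
                    rw [one_div, inv_pow, mul_comm (u ^ Q), mul_assoc, mul_inv_cancel₀ huQ, mul_one]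
                · intro z1 h1 z2 h2 he
                  have h3 : (x₁ - z1) = (x₁ - z2) :=
                    mul_right_cancel₀ (inv_ne_zero hu0) he
                  exact sub_right_inj.1 h3
            _ ≤ q := hfix
      have := Finset.card_le_mul_card_image S q hfib
      have himg : (S.image ψ).card ≤ S'.card :=
        Finset.card_le_card (by
          intro y hy
          obtain ⟨x, hx, rfl⟩ := Finset.mem_image.1 hy
          exact hmaps x hx)
      calc S.card ≤ q * (S.image ψ).card := this
      _ ≤ q * S'.card := Nat.mul_le_mul_left _ himg
      _ ≤ q * q ^ k := Nat.mul_le_mul_left _ hIH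
      _ = q ^ (k+1) := by ring

open Polynomial in
private lemma trinomial_facts (p w t n : ℕ) [Fact p.Prime] (ht : t = p ^ w + 1)
    (hn : n = t * (t - 1) + 1) :
    ((X ^ t + X + 1 : (ZMod p)[X]).Monic ∧ (X ^ t + X + 1 : (ZMod p)[X]).natDegree = t)
      ∧ (X ^ t + X + 1 : (ZMod p)[X]) ∣ X ^ n - 1 := by
  have hp2 : 2 ≤ p := (Fact.out : p.Prime).two_le
  have hT1 : 1 ≤ p ^ w := Nat.one_le_pow _ _ (by omega)
  have ht2 : 2 ≤ t := by omega
  set f : (ZMod p)[X] := X ^ t + X + 1 with hf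
  have hdX1 : ((X + 1 : (ZMod p)[X])).degree < (t : WithBot ℕ) := by
    calc (X + 1 : (ZMod p)[X]).degree ≤ max (X : (ZMod p)[X]).degree (1 : (ZMod p)[X]).degree :=
      degree_add_le _ _
    _ ≤ 1 := by simp [degree_X, degree_one]
    _ < (t : WithBot ℕ) := by exact_mod_cast Nat.one_lt_cast.2 (by omega)
  have hfeq : f = X ^ t + (X + 1) := by rw [hf]; ring
  have hfm : f.Monic := by rw [hfeq]; exact monic_X_pow_add hdX1
  have hfdeg : f.degree = (t : WithBot ℕ) := by
    rw [hfeq]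
    rw [degree_add_eq_left_of_degree_lt (by rwa [degree_X_pow])]
    exact degree_X_pow t
  have hfnat : f.natDegree = t := natDegree_eq_of_degree_eq_some hfdeg
  haveI : Nontrivial (AdjoinRoot f) := by
    constructor
    refine ⟨1, 0, fun h => ?_⟩
    have h1 : AdjoinRoot.mk f 1 = 0 := by rw [map_one, h]
    have hdvd : f ∣ 1 := AdjoinRoot.mk_eq_zero.1 h1
    have h2 := Polynomial.degree_eq_zero_of_isUnit (isUnit_of_dvd_one hdvd)
    rw [hfdeg] at h2
    exact absurd (by exact_mod_cast h2) (by omega : t ≠ 0)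
  haveI : CharP (AdjoinRoot f) p :=
    charP_of_injective_algebraMap' (ZMod p) (A := AdjoinRoot f) p
  refine ⟨⟨hfm, hfnat⟩, ?_⟩
  rw [← AdjoinRoot.mk_eq_zero (f := f)]
  set y : AdjoinRoot f := AdjoinRoot.root f with hy
  have hmk : (AdjoinRoot.mk f) f = y ^ t + y + 1 := by
    show (AdjoinRoot.mk f) (X ^ t + X + 1) = y ^ t + y + 1
    simp [map_add, map_pow, AdjoinRoot.mk_X, hy]
  have hroot : y ^ t + y + 1 = 0 := by
    rw [← hmk]; exact AdjoinRoot.mk_self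
  have hyt : y ^ t = -(y + 1) := by linear_combination hroot
  have hfrob : (-(y + 1)) ^ p ^ w = -(y ^ p ^ w + 1) := by
    simp only [← iterateFrobenius_def (R := AdjoinRoot f) p w, map_neg, map_add, map_one]
  have hyn : y ^ n = 1 := by
    have hsub : t - 1 = p ^ w := by omega
    have hnn : n = t * p ^ w + 1 := by rw [hn, hsub]
    have e1 : y ^ n = (y ^ t) ^ (p ^ w) * y := by
      rw [hnn, pow_succ, pow_mul]
    rw [e1, hyt, hfrob]
    have h5 : y ^ (p ^ w) * y = y ^ t := by
      rw [ht, pow_succ]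
    linear_combination (-1 : AdjoinRoot f) * h5 + (-1 : AdjoinRoot f) * hyt
  rw [map_sub, map_pow, map_one, AdjoinRoot.mk_X]
  rw [← hy, hyn, sub_self]

/-- Rank weight of a vector `v ∈ K^n` over `F_q`. -/
noncomputable def rkw (Fq : Type) [Field Fq] {K : Type} [Field K] [Algebra Fq K] {n : ℕ}
    (v : Fin n → K) : ℕ :=
  Module.finrank Fq ↥(Submodule.span Fq (Set.range v))

/-- Ball of radius `t` around `w` in the rank metric. -/
def ball (Fq : Type) [Field Fq] {K : Type} [Field K] [Algebra Fq K] {n : ℕ}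
    (w : Fin n → K) (t : ℕ) : Set (Fin n → K) :=
  {c : Fin n → K | rkw Fq (w - c) ≤ t}

/-- Minimum rank distance of a code `C ⊆ K^n`. -/
noncomputable def minDist (Fq : Type) [Field Fq] {K : Type} [Field K] [Algebra Fq K] {n : ℕ}
    (C : Set (Fin n → K)) : ℕ :=
  sInf {r : ℕ | ∃ u ∈ C, ∃ v ∈ C, u ≠ v ∧ rkw Fq (u - v) = r}

set_option maxHeartbeats 1000000 in
open Finset Polynomial in
theorem stmt_14 (p q s n m t j : ℕ) (Fq K : Type) [Field Fq] [Fintype Fq] [Field K]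
    [Fintype K] [Algebra Fq K]
    (hp : p.Prime) (hpe : ∃ e : ℕ, 0 < e ∧ q = p ^ e)
    (hcard : Fintype.card Fq = q) (hfin : Module.finrank Fq K = m)
    (hn : 0 < n) (hnm : n ∣ m) (hs : Nat.gcd s m = 1)
    (𝒞 : Set (K → K))
    (hlin : ∀ f ∈ 𝒞, ∃ N : ℕ, ∃ a : Fin N → K, ∀ x : K,
      f x = ∑ i : Fin N, a i * x ^ ((q ^ s) ^ (i : ℕ)))
    (β : K) (hβ : β ≠ 0)
    (α : Fin n → K) (hα : LinearIndependent Fq α)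
    (hspan : (Submodule.span Fq (Set.range α) : Set K)
      = (fun y : K => β * y) '' {x : K | x ^ q ^ n = x})
    (C : Set (Fin n → K)) (hC : C = (fun g : K → K => fun i : Fin n => g (α i)) '' 𝒞)
    (d : ℕ) (hd : d = minDist Fq C)
    (ht0 : 0 < t)
    (ht1 : (n : ℤ) - d + 1 ≤ (t : ℤ))
    (ht2 : (t : ℤ) ≤ (n : ℤ) - (((d - 1) / 2 : ℕ) : ℤ) - 1)
    (htp : ∃ w : ℕ, t - 1 = p ^ w)
    (hnt : n = t * (t - 1) + 1)
    (hj : (j : ℤ) < (n : ℤ) - (t : ℤ))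
    (hGab : {f : K → K | ∃ a b : K, ∀ x : K,
        f x = a * x ^ ((q ^ s) ^ j) + b * x ^ ((q ^ s) ^ (j + 1))} ⊆ 𝒞) :
    ∃ w : Fin n → K, w ∉ C ∧
      (q ^ n - 1) / (q - 1) ≤ Nat.card ↥(C ∩ ball Fq w (n - t)) := by
  classical
  obtain ⟨e, he0, hqe⟩ := hpe
  obtain ⟨w0, htw⟩ := htp
  haveI : Fact p.Prime := ⟨hp⟩
  have hp2 : 2 ≤ p := hp.two_le
  have hq2 : 2 ≤ q := by
    rw [hqe]
    calc 2 ≤ p := hp2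
    _ = p ^ 1 := (pow_one p).symm
    _ ≤ p ^ e := Nat.pow_le_pow_right (by omega) he0
  have hpw1 : 1 ≤ p ^ w0 := Nat.one_le_pow _ _ (by omega)
  have ht2' : 2 ≤ t := by omega
  have htT : t = p ^ w0 + 1 := by omega
  have hn3 : 3 ≤ n := by
    rw [hnt]
    have h1 : 1 ≤ t - 1 := by omega
    have := Nat.mul_le_mul ht2' h1
    omega
  have hjtn : j + t < n := by omega
  have hm0 : 0 < m := hfin ▸ Module.finrank_pos
  have hs1 : Nat.gcd s n = 1 := Nat.Coprime.coprime_dvd_right hnm hs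
  have hs0 : 0 < s := by
    rcases Nat.eq_zero_or_pos s with h | h
    · exfalso
      rw [h, Nat.gcd_zero_left] at hs
      have h1 : n ∣ 1 := hs ▸ hnm
      have hn1 : n = 1 := Nat.dvd_one.1 h1
      omega
    · exact h
  -- characteristic
  haveI hcharFq : CharP Fq p := by
    obtain ⟨n', hp', hcard'⟩ := FiniteField.card Fq (ringChar Fq)
    have hpr : p = ringChar Fq := by
      have h1 : p ∣ (ringChar Fq) ^ (n' : ℕ) := by
        rw [← hcard', hcard, hqe]
        exact dvd_pow_self p (by omega)
      have h2 : p ∣ ringChar Fq := hp.dvd_of_dvd_pow h1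
      exact ((Nat.prime_dvd_prime_iff_eq hp hp').1 h2)
    rw [hpr]
    exact ringChar.charP Fq
  haveI hcharK : CharP K p := charP_of_injective_algebraMap (algebraMap Fq K).injective p
  -- Frobenius facts
  set Q : ℕ := q ^ s with hQdef
  have hQpow : ∀ i : ℕ, Q ^ i = p ^ (e * (s * i)) := by
    intro i
    rw [hQdef, hqe, ← pow_mul, ← pow_mul]
  have hQ2 : 2 ≤ Q := by
    rw [hQdef]
    calc 2 ≤ q := hq2
    _ = q ^ 1 := (pow_one q).symm
    _ ≤ q ^ s := Nat.pow_le_pow_right (by omega) hs0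
  have frobQ : ∀ (i : ℕ) (x y : K), (x + y) ^ Q ^ i = x ^ Q ^ i + y ^ Q ^ i := by
    intro i x y
    rw [hQpow i]
    exact add_pow_char_pow x y p _
  have frobQsub : ∀ (i : ℕ) (x y : K), (x - y) ^ Q ^ i = x ^ Q ^ i - y ^ Q ^ i := by
    intro i x y
    have := frobQ i (x - y) y
    rw [sub_add_cancel] at this
    rw [this]; ring
  have powQ_mul : ∀ (x : K) (i i' : ℕ), (x ^ Q ^ i) ^ Q ^ i' = x ^ Q ^ (i + i') := by
    intro x i i'
    rw [← pow_mul, ← pow_add]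
  have hqn_pow : (q : ℕ) ^ n = p ^ (e * n) := by rw [hqe, ← pow_mul]
  have frobN : ∀ x y : K, (x + y) ^ q ^ n = x ^ q ^ n + y ^ q ^ n := by
    intro x y
    rw [hqn_pow]
    exact add_pow_char_pow x y p _
  -- The subfield F
  set F : Subfield K :=
    { carrier := {x : K | x ^ q ^ n = x}
      mul_mem' := fun {a b} ha hb => by
        simp only [Set.mem_setOf_eq] at *
        rw [mul_pow, ha, hb]
      one_mem' := by simp
      add_mem' := fun {a b} ha hb => by
        simp only [Set.mem_setOf_eq] at *
        rw [frobN, ha, hb]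
      zero_mem' := by
        simp only [Set.mem_setOf_eq]
        exact zero_pow (by positivity)
      neg_mem' := fun {a} ha => by
        simp only [Set.mem_setOf_eq] at *
        have h0 : (0 : K) ^ q ^ n = 0 := zero_pow (by positivity)
        have := frobN (-a) a
        simp only [neg_add_cancel, h0] at this
        linear_combination -this - ha
      inv_mem' := fun a ha => by
        simp only [Set.mem_setOf_eq] at *
        rw [inv_pow, ha] } with hFdef
  have hFmem : ∀ x : K, x ∈ F ↔ x ^ q ^ n = x := fun x => Iff.rfl
  have hFset : (F : Set K) = {x : K | x ^ q ^ n = x} := rfl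
  -- F is stable under x ↦ x^{Q^i}
  have hFQmem : ∀ x ∈ F, ∀ i : ℕ, x ^ Q ^ i ∈ F := by
    intro x hx i
    rw [hFmem] at hx ⊢
    rw [← pow_mul, mul_comm, pow_mul, hx]
  -- scalars commute with Q-powers
  have halgpow : ∀ (c : Fq) (i : ℕ), (algebraMap Fq K c) ^ Q ^ i = algebraMap Fq K c := by
    intro c i
    rw [← map_pow]
    congr 1
    have h1 : c ^ (Fintype.card Fq) ^ (s * i) = c := FiniteField.pow_card_pow (s * i) c
    rw [hcard] at h1
    have h2 : Q ^ i = q ^ (s * i) := by rw [hQdef, ← pow_mul]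
    rw [h2, h1]
  have hsmulQ : ∀ (c : Fq) (x : K) (i : ℕ), (c • x) ^ Q ^ i = c • (x ^ Q ^ i) := by
    intro c x i
    rw [Algebra.smul_def, Algebra.smul_def, mul_pow, halgpow]
  have halgF : ∀ c : Fq, algebraMap Fq K c ∈ F := by
    intro c
    rw [hFmem, ← map_pow]
    congr 1
    have h1 : c ^ (Fintype.card Fq) ^ n = c := FiniteField.pow_card_pow n c
    rw [hcard] at h1
    exact h1
  -- x^{Q^n} = x on F
  have hFQn : ∀ x ∈ F, x ^ Q ^ n = x := by
    intro x hx
    have key : ∀ k : ℕ, x ^ (q ^ n) ^ k = x := by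
      intro k
      induction k with
      | zero => simp
      | succ k ih =>
        rw [pow_succ, pow_mul, ih]
        exact (hFmem x).1 hx
    have : Q ^ n = (q ^ n) ^ s := by
      rw [hQdef, ← pow_mul, ← pow_mul, mul_comm]
    rw [this, key s]
  -- cardinality of F
  set Ffin : Finset K := Finset.univ.filter (· ∈ F) with hFfin
  have hFcard : Ffin.card = q ^ n := by
    have h1 : Nat.card ↥(Submodule.span Fq (Set.range α)) = q ^ n := by
      rw [Nat.card_eq_fintype_card, Module.card_eq_pow_finrank (K := Fq), hcard, finrank_span_eq_card hα,
        Fintype.card_fin]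
    have h2 : (Submodule.span Fq (Set.range α) : Set K).ncard = q ^ n := by
      rw [← Nat.card_coe_set_eq]
      exact h1
    rw [hspan] at h2
    rw [Set.ncard_image_of_injective _ (mul_right_injective₀ hβ)] at h2
    have h3 : {x : K | x ^ q ^ n = x}.ncard = {x : K | x ^ q ^ n = x}.toFinset.card :=
      Set.ncard_eq_toFinset_card' _
    rw [h3] at h2
    rw [← h2, hFfin]
    congr 1
    ext x
    simp [Set.mem_toFinset, hFmem]
  -- fixed points of x ↦ x^q number at most q
  have hqroot_card : (Finset.univ.filter (fun z : K => z ^ q = z)).card ≤ q := by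
    have hPne : (X ^ q - X : K[X]) ≠ 0 := by
      intro hcon
      have h1 : (X ^ q : K[X]) = X := by
        have := sub_eq_zero.1 hcon
        exact this
      have h2 := congrArg Polynomial.natDegree h1
      rw [natDegree_X_pow, natDegree_X] at h2
      omega
    have hsub : (Finset.univ.filter (fun z : K => z ^ q = z))
        ⊆ (X ^ q - X : K[X]).roots.toFinset := by
      intro z hz
      simp only [Finset.mem_filter, Finset.mem_univ, true_and] at hz
      rw [Multiset.mem_toFinset, Polynomial.mem_roots']
      refine ⟨hPne, ?_⟩
      simp [Polynomial.IsRoot, hz, sub_eq_zero]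
    calc (Finset.univ.filter (fun z : K => z ^ q = z)).card
        ≤ (X ^ q - X : K[X]).roots.toFinset.card := Finset.card_le_card hsub
    _ ≤ Multiset.card (X ^ q - X : K[X]).roots := Multiset.toFinset_card_le _
    _ ≤ (X ^ q - X : K[X]).natDegree := Polynomial.card_roots' _
    _ ≤ q := by
      calc (X ^ q - X : K[X]).natDegree ≤ max (X ^ q : K[X]).natDegree (X : K[X]).natDegree :=
        Polynomial.natDegree_sub_le _ _
      _ ≤ q := by
        rw [natDegree_X_pow, natDegree_X]
        omega
  -- fixed points of Frobenius within F give at most q elements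
  have hfixq : ∀ z : K, z ∈ F → z ^ Q = z → z ^ q = z := by
    intro z hzF hzQ
    rcases eq_or_ne z 0 with rfl | hz0
    · exact zero_pow (by omega)
    · have hord : ∀ N : ℕ, 2 ≤ N → z ^ N = z → orderOf z ∣ N - 1 := by
        intro N hN hzN
        apply orderOf_dvd_of_pow_eq_one
        have h1 : z ^ (N - 1) * z = 1 * z := by
          rw [one_mul, ← pow_succ]
          have : N - 1 + 1 = N := by omega
          rw [this, hzN]
        exact mul_right_cancel₀ hz0 h1
      have hd1 : orderOf z ∣ q ^ s - 1 := by
        apply hord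
        · calc 2 ≤ q := hq2
          _ = q ^ 1 := (pow_one q).symm
          _ ≤ q ^ s := Nat.pow_le_pow_right (by omega) hs0
        · rw [← hQdef]; exact hzQ
      have hd2 : orderOf z ∣ q ^ n - 1 := by
        apply hord
        · calc 2 ≤ q := hq2
          _ = q ^ 1 := (pow_one q).symm
          _ ≤ q ^ n := Nat.pow_le_pow_right (by omega) (by omega)
        · exact (hFmem z).1 hzF
      have hdvd : orderOf z ∣ q - 1 := aux_dvd_q_sub_one hq2 hs0 hs1 hd1 hd2
      have hz1 : z ^ (q - 1) = 1 := orderOf_dvd_iff_pow_eq_one.1 hdvd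
      have hq3 : q - 1 + 1 = q := by omega
      rw [← hq3, pow_succ, hz1, one_mul]
  have hfixcard : (Finset.univ.filter (fun z : K => z ∈ F ∧ z ^ Q = z)).card ≤ q := by
    refine le_trans (Finset.card_le_card ?_) hqroot_card
    intro z hz
    simp only [Finset.mem_filter, Finset.mem_univ, true_and] at hz ⊢
    exact hfixq z hz.1 hz.2
  -- polynomial setup over ZMod p
  obtain ⟨⟨hfm, hfnat⟩, hfdvd⟩ := trinomial_facts p w0 t n htT hnt
  set fP : (ZMod p)[X] := X ^ t + X + 1 with hfP
  obtain ⟨hP, hfh⟩ := hfdvd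
  have hXnm : (X ^ n - 1 : (ZMod p)[X]).Monic := by
    have h1 := Polynomial.monic_X_pow_sub_C (1 : ZMod p) (n := n) (by omega)
    rwa [map_one] at h1
  have hhm : hP.Monic := hfm.of_mul_monic_left (hfh ▸ hXnm)
  have hhnat : hP.natDegree = n - t := by
    have h1 : (X ^ n - 1 : (ZMod p)[X]).natDegree = n := by
      have := Polynomial.natDegree_X_pow_sub_C (n := n) (r := (1 : ZMod p))
      rwa [map_one] at this
    rw [hfh, hfm.natDegree_mul hhm, hfnat] at h1
    omega
  -- the Frobenius as a ZMod p linear endomorphism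
  letI : Algebra (ZMod p) K := ZMod.algebra _ _
  have hzsmul : ∀ (c : ZMod p) (x : K), c • x = algebraMap (ZMod p) K c * x := fun c x =>
    Algebra.smul_def c x
  have hzpow : ∀ (c : ZMod p) (i : ℕ), (algebraMap (ZMod p) K c) ^ Q ^ i
      = algebraMap (ZMod p) K c := by
    intro c i
    rw [← map_pow]
    congr 1
    rw [hQpow i]
    exact ZMod.pow_card_pow c
  set σL : K →ₗ[ZMod p] K :=
    { toFun := fun x => x ^ Q
      map_add' := fun x y => by
        have := frobQ 1 x y
        rwa [pow_one] at this
      map_smul' := fun c x => by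
        simp only [RingHom.id_apply]
        have h1 := hsmulQ -- unused
        rw [hzsmul, hzsmul, mul_pow]
        have := hzpow c 1
        rw [pow_one] at this
        rw [this] } with hσL
  have hσLpow : ∀ (i : ℕ) (x : K), (σL ^ i) x = x ^ Q ^ i := by
    intro i
    induction i with
    | zero => intro x; simp
    | succ i ih =>
      intro x
      rw [pow_succ, Module.End.mul_apply, ih]
      show (x ^ Q : K) ^ Q ^ i = x ^ Q ^ (i + 1)
      rw [← pow_mul, ← pow_succ']
  -- evaluation of a polynomial g at σL, applied to x
  have haeval : ∀ (g : (ZMod p)[X]) (x : K), (Polynomial.aeval σL g) x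
      = ∑ i ∈ Finset.range (g.natDegree + 1),
          algebraMap (ZMod p) K (g.coeff i) * x ^ Q ^ i := by
    intro g x
    rw [Polynomial.aeval_eq_sum_range]
    rw [LinearMap.sum_apply]
    apply Finset.sum_congr rfl
    intro i _
    rw [LinearMap.smul_apply, hσLpow i x, hzsmul]
  have hfapply : ∀ y : K, (Polynomial.aeval σL fP) y = y ^ Q ^ t + y ^ Q ^ 1 + y := by
    intro y
    rw [hfP]
    simp only [map_add, map_pow, map_one, Polynomial.aeval_X, LinearMap.add_apply,
      Module.End.one_apply]
    rw [hσLpow t y]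
    congr 2
    show (σL) y = y ^ Q ^ 1
    rw [pow_one]
    rfl
  -- the trinomial kernel set
  set Sfin : Finset K :=
    Finset.univ.filter (fun x : K => x ∈ F ∧ x ^ Q ^ t + x ^ Q ^ 1 + x = 0) with hSfin
  -- H maps F into the kernel set
  set Hmap : K → K := fun x => (Polynomial.aeval σL hP) x with hHmap
  have hHrep : ∀ x : K, Hmap x = ∑ i ∈ Finset.range ((n - t) + 1),
      algebraMap (ZMod p) K (hP.coeff i) * x ^ Q ^ i := by
    intro x
    show (Polynomial.aeval σL hP) x = _
    rw [haeval hP x, hhnat]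
  have hzF : ∀ c : ZMod p, algebraMap (ZMod p) K c ∈ F := by
    intro c
    rw [hFmem, ← map_pow]
    congr 1
    rw [hqn_pow]
    exact ZMod.pow_card_pow c
  have hHF : ∀ x ∈ F, Hmap x ∈ F := by
    intro x hx
    rw [hHrep]
    apply Subfield.sum_mem
    intro i _
    exact F.mul_mem (hzF _) (hFQmem x hx i)
  have hHker : ∀ x ∈ F, (Hmap x) ^ Q ^ t + (Hmap x) ^ Q ^ 1 + (Hmap x) = 0 := by
    intro x hx
    have h1 : (Polynomial.aeval σL fP) (Hmap x) = (Polynomial.aeval σL (fP * hP)) x := by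
      rw [map_mul]
      rfl
    have h2 : (Polynomial.aeval σL (fP * hP)) x = x ^ Q ^ n - x := by
      rw [← hfh]
      simp only [map_sub, map_pow, map_one, Polynomial.aeval_X, LinearMap.sub_apply,
        Module.End.one_apply]
      rw [hσLpow n x]
    rw [← hfapply, h1, h2, hFQn x hx, sub_self]
  have hHmem : ∀ x ∈ F, Hmap x ∈ Sfin := by
    intro x hx
    rw [hSfin]
    simp only [Finset.mem_filter, Finset.mem_univ, true_and]
    exact ⟨hHF x hx, hHker x hx⟩
  -- ore bound on kernel of H
  have hHkerbound : (Finset.univ.filter (fun x : K => x ∈ F ∧ Hmap x = 0)).card ≤ q ^ (n - t) := by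
    have h1 := ore_bound q Q hq2 (by omega) frobQ F (fun x hx => by
        have := hFQmem x hx 1
        rwa [pow_one] at this) hfixcard (n - t)
      (fun i => algebraMap (ZMod p) K (hP.coeff i))
      (by
        show algebraMap (ZMod p) K (hP.coeff (n - t)) ≠ 0
        have : hP.coeff (n - t) = 1 := by
          rw [← hhnat]
          exact hhm.coeff_natDegree
        rw [this, map_one]
        exact one_ne_zero)
    refine le_trans (le_of_eq ?_) h1
    congr 1
    ext x
    simp only [Finset.mem_filter, Finset.mem_univ, true_and]
    constructor
    · rintro ⟨h1', h2'⟩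
      exact ⟨h1', by rw [← hHrep x]; exact h2'⟩
    · rintro ⟨h1', h2'⟩
      exact ⟨h1', by rw [hHrep x]; exact h2'⟩
  -- lower bound on Sfin
  have hScard : q ^ t ≤ Sfin.card := by
    have hmaps : ∀ x ∈ Ffin, Hmap x ∈ Sfin := by
      intro x hx
      rw [hFfin] at hx
      simp only [Finset.mem_filter, Finset.mem_univ, true_and] at hx
      exact hHmem x hx
    have hfib : ∀ y ∈ Ffin.image Hmap, (Ffin.filter (fun x => Hmap x = y)).card ≤ q ^ (n - t) := by
      intro y hy
      rcases Finset.eq_empty_or_nonempty (Ffin.filter (fun x => Hmap x = y)) with he | ⟨x₁, hx₁⟩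
      · rw [he]; simp
      · have hx₁F : x₁ ∈ F := by
          have := (Finset.mem_filter.1 hx₁).1
          rw [hFfin] at this
          simpa using this
        have hx₁y : Hmap x₁ = y := (Finset.mem_filter.1 hx₁).2
        calc (Ffin.filter (fun x => Hmap x = y)).card
            ≤ (Finset.univ.filter (fun x : K => x ∈ F ∧ Hmap x = 0)).card := by
              apply Finset.card_le_card_of_injOn (fun x' => x₁ - x')
              · intro x' hx'
                have hx'F : x' ∈ F := by
                  have := (Finset.mem_filter.1 hx').1
                  rw [hFfin] at this
                  simpa using this
                have hx'y : Hmap x' = y := (Finset.mem_filter.1 hx').2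
                simp only [Finset.mem_coe, Finset.mem_filter, Finset.mem_univ, true_and]
                refine ⟨F.sub_mem hx₁F hx'F, ?_⟩
                show (Polynomial.aeval σL hP) (x₁ - x') = 0
                rw [map_sub]
                show Hmap x₁ - Hmap x' = 0
                rw [hx₁y, hx'y, sub_self]
              · intro z1 _ z2 _ hz
                have : x₁ - z1 = x₁ - z2 := hz
                exact sub_right_inj.1 this
          _ ≤ q ^ (n - t) := hHkerbound
    have h1 := Finset.card_le_mul_card_image Ffin (q ^ (n - t)) hfib
    have h2 : (Ffin.image Hmap).card ≤ Sfin.card :=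
      Finset.card_le_card (by
        intro y hy
        obtain ⟨x, hx, rfl⟩ := Finset.mem_image.1 hy
        exact hmaps x hx)
    rw [hFcard] at h1
    have h3 : q ^ n ≤ q ^ (n - t) * Sfin.card := le_trans h1 (Nat.mul_le_mul_left _ h2)
    have h4 : q ^ n = q ^ (n - t) * q ^ t := by
      rw [← pow_add]
      congr 1
      omega
    rw [h4] at h3
    exact Nat.le_of_mul_le_mul_left h3 (by positivity)
  -- the span of the evaluation points
  set V₀ : Submodule Fq K := Submodule.span Fq (Set.range α) with hV₀
  have hV₀rank : Module.finrank Fq ↥V₀ = n := by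
    rw [hV₀, finrank_span_eq_card hα, Fintype.card_fin]
  have hβF : ∀ y : K, y ∈ F → β * y ∈ V₀ := by
    intro y hy
    have h1 : β * y ∈ (V₀ : Set K) := by
      rw [hspan]
      exact ⟨y, hy, rfl⟩
    exact h1
  -- the trinomial kernel as a submodule
  set Ssub : Submodule Fq K :=
    { carrier := {x : K | x ∈ F ∧ x ^ Q ^ t + x ^ Q ^ 1 + x = 0}
      add_mem' := fun {a b} ha hb => by
        refine ⟨F.add_mem ha.1 hb.1, ?_⟩
        rw [frobQ t a b, frobQ 1 a b]
        linear_combination ha.2 + hb.2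
      zero_mem' := by
        refine ⟨F.zero_mem, ?_⟩
        rw [zero_pow (show Q ^ t ≠ 0 by positivity), zero_pow (show Q ^ 1 ≠ 0 by positivity)]
        ring
      smul_mem' := fun c x hx => by
        refine ⟨?_, ?_⟩
        · show c • x ∈ F
          rw [Algebra.smul_def]
          exact F.mul_mem (halgF c) hx.1
        · show (c • x) ^ Q ^ t + (c • x) ^ Q ^ 1 + c • x = 0
          rw [hsmulQ, hsmulQ, ← smul_add, ← smul_add, hx.2, smul_zero] } with hSsub
  have hSsubmem : ∀ x : K, x ∈ Ssub ↔ (x ∈ F ∧ x ^ Q ^ t + x ^ Q ^ 1 + x = 0) := fun x => Iff.rfl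
  have hSsubfin : (Ssub : Set K).ncard = Sfin.card := by
    rw [Set.ncard_eq_toFinset_card']
    congr 1
    ext x
    simp only [Set.mem_toFinset, SetLike.mem_coe, hSsubmem, hSfin, Finset.mem_filter,
      Finset.mem_univ, true_and]
  -- the deep-hole word and codewords
  set wvec : Fin n → K := fun i => (α i) ^ Q ^ (t + j) with hwvec
  set Af : K → K := fun u => -(u ^ Q ^ (t + j) * (u ^ Q ^ j)⁻¹) with hAf
  set Bf : K → K := fun u => -(u ^ Q ^ (t + j) * (u ^ Q ^ (j + 1))⁻¹) with hBf
  set cfun : K → (Fin n → K) := fun γ => fun i =>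
    Af (β * γ) * (α i) ^ Q ^ j + Bf (β * γ) * (α i) ^ Q ^ (j + 1) with hcfun
  have hcwC : ∀ γ : K, cfun γ ∈ C := by
    intro γ
    rw [hC]
    refine ⟨fun z => Af (β * γ) * z ^ Q ^ j + Bf (β * γ) * z ^ Q ^ (j + 1), ?_, rfl⟩
    exact hGab ⟨Af (β * γ), Bf (β * γ), fun z => rfl⟩
  -- the associated linear maps
  have hlinmap : ∀ A B : K, ∃ ℓ : K →ₗ[Fq] K, ∀ x : K,
      ℓ x = x ^ Q ^ (t + j) - A * x ^ Q ^ j - B * x ^ Q ^ (j + 1) := by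
    intro A B
    refine ⟨{ toFun := fun x => x ^ Q ^ (t + j) - A * x ^ Q ^ j - B * x ^ Q ^ (j + 1),
              map_add' := fun x y => by
                rw [frobQ (t + j) x y, frobQ j x y, frobQ (j + 1) x y]
                ring,
              map_smul' := fun c x => by
                simp only [RingHom.id_apply]
                rw [hsmulQ, hsmulQ, hsmulQ, smul_sub, smul_sub, mul_smul_comm,
                  mul_smul_comm] },
      fun x => rfl⟩
  haveI hFD : FiniteDimensional Fq K := inferInstance
  -- the ball membership for γ ∈ F, γ ≠ 0
  have hballmem : ∀ γ : K, γ ∈ F → γ ≠ 0 → cfun γ ∈ ball Fq wvec (n - t) := by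
    intro γ hγF hγ0
    obtain ⟨ℓ, hℓ⟩ := hlinmap (Af (β * γ)) (Bf (β * γ))
    have hu : β * γ ≠ 0 := mul_ne_zero hβ hγ0
    have hwc : wvec - cfun γ = ⇑ℓ ∘ α := by
      funext i
      rw [Pi.sub_apply, Function.comp_apply, hℓ]
      show (α i) ^ Q ^ (t + j) - (Af (β * γ) * (α i) ^ Q ^ j
        + Bf (β * γ) * (α i) ^ Q ^ (j + 1)) = _
      ring
    have hker : ∀ x ∈ Ssub, ℓ (β * γ * x) = 0 := by
      intro x hx
      have hident : ℓ (β * γ * x)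
          = (β * γ) ^ Q ^ (t + j) * ((x ^ Q ^ t + x ^ Q ^ 1 + x) ^ Q ^ j) := by
        rw [hℓ]
        rw [frobQ j (x ^ Q ^ t + x ^ Q ^ 1) x, frobQ j (x ^ Q ^ t) (x ^ Q ^ 1),
          powQ_mul x t j, powQ_mul x 1 j]
        rw [hAf, hBf]
        simp only []
        have e1 : (1 : ℕ) + j = j + 1 := by omega
        rw [e1]
        have h1 : (β * γ) ^ Q ^ j ≠ 0 := pow_ne_zero _ hu
        have h2 : (β * γ) ^ Q ^ (j + 1) ≠ 0 := pow_ne_zero _ hu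
        field_simp
        ring
      rw [hident, (hSsubmem x).1 hx |>.2]
      rw [zero_pow (by positivity), mul_zero]
    -- the kernel submodule
    set Wγ : Submodule Fq K := Submodule.map (LinearMap.mulLeft Fq (β * γ)) Ssub with hWγ
    have hWV : Wγ ≤ V₀ := by
      rintro y ⟨x, hx, rfl⟩
      show β * γ * x ∈ V₀
      rw [mul_assoc]
      exact hβF _ (F.mul_mem hγF ((hSsubmem x).1 hx).1)
    have hWker : ∀ y ∈ Wγ, ℓ y = 0 := by
      rintro y ⟨x, hx, rfl⟩
      exact hker x hx
    have hWcard : Nat.card ↥Wγ = Sfin.card := by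
      have h1 : (Wγ : Set K) = (fun x => β * γ * x) '' (Ssub : Set K) := by
        rw [hWγ, Submodule.map_coe]
        congr 1
      rw [← SetLike.coe_sort_coe, Nat.card_coe_set_eq, h1,
        Set.ncard_image_of_injective _ (mul_right_injective₀ hu), hSsubfin]
    have hfrankW : t ≤ Module.finrank Fq ↥Wγ := by
      have h1 : Fintype.card ↥Wγ = q ^ Module.finrank Fq ↥Wγ := by
        rw [Module.card_eq_pow_finrank (K := Fq), hcard]
      have h2 : q ^ t ≤ q ^ Module.finrank Fq ↥Wγ := by
        rw [← h1, ← Nat.card_eq_fintype_card, hWcard]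
        exact hScard
      exact (Nat.pow_le_pow_iff_right (by omega)).1 h2
    -- rank-nullity
    show rkw Fq (wvec - cfun γ) ≤ n - t
    rw [rkw, hwc, Set.range_comp]
    have hspanmap : Submodule.span Fq (⇑ℓ '' Set.range α) = Submodule.map ℓ V₀ := by
      rw [hV₀]
      exact Submodule.span_image ℓ
    rw [hspanmap]
    set g : ↥V₀ →ₗ[Fq] K := ℓ.comp V₀.subtype with hg
    have hrg : LinearMap.range g = Submodule.map ℓ V₀ := by
      rw [hg, LinearMap.range_comp, Submodule.range_subtype]
    have hrn := LinearMap.finrank_range_add_finrank_ker g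
    rw [hV₀rank] at hrn
    have hkerge : t ≤ Module.finrank Fq ↥(LinearMap.ker g) := by
      have hle : Submodule.comap V₀.subtype Wγ ≤ LinearMap.ker g := by
        intro y hy
        rw [LinearMap.mem_ker, hg, LinearMap.comp_apply]
        exact hWker _ (Submodule.mem_comap.1 hy)
      have heq : Module.finrank Fq ↥(Submodule.comap V₀.subtype Wγ)
          = Module.finrank Fq ↥Wγ :=
        LinearEquiv.finrank_eq (Submodule.comapSubtypeEquivOfLe hWV)
      calc t ≤ Module.finrank Fq ↥Wγ := hfrankW
      _ = Module.finrank Fq ↥(Submodule.comap V₀.subtype Wγ) := heq.symm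
      _ ≤ Module.finrank Fq ↥(LinearMap.ker g) := Submodule.finrank_mono hle
    rw [← hrg]
    omega
  -- injectivity of the Q^j-power map
  have hpowinj : Function.Injective (fun x : K => x ^ Q ^ j) := by
    intro x y hxy
    simp only [] at hxy
    have h1 : (x - y) ^ Q ^ j = 0 := by rw [frobQsub j x y, hxy, sub_self]
    have h2 : x - y = 0 := pow_eq_zero_iff (by positivity) |>.1 h1
    linear_combination h2
  -- order divisibility helper
  have hordK : ∀ z : K, z ≠ 0 → ∀ N : ℕ, 2 ≤ N → z ^ N = z → orderOf z ∣ N - 1 := by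
    intro z hz0 N hN hzN
    apply orderOf_dvd_of_pow_eq_one
    have h1 : z ^ (N - 1) * z = 1 * z := by
      rw [one_mul, ← pow_succ]
      have e : N - 1 + 1 = N := by omega
      rw [e, hzN]
    exact mul_right_cancel₀ hz0 h1
  -- a second family of linear maps
  have hlinmap2 : ∀ A B : K, ∃ ℓ : K →ₗ[Fq] K, ∀ x : K,
      ℓ x = A * x ^ Q ^ j + B * x ^ Q ^ (j + 1) := by
    intro A B
    refine ⟨{ toFun := fun x => A * x ^ Q ^ j + B * x ^ Q ^ (j + 1),
              map_add' := fun x y => by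
                rw [frobQ j x y, frobQ (j + 1) x y]
                ring,
              map_smul' := fun c x => by
                simp only [RingHom.id_apply]
                rw [hsmulQ, hsmulQ, smul_add, mul_smul_comm, mul_smul_comm] },
      fun x => rfl⟩
  -- distinctness up to (q-1)-th roots of unity
  have hdist : ∀ γ₁ γ₂ : K, γ₁ ∈ F → γ₁ ≠ 0 → γ₂ ∈ F → γ₂ ≠ 0 → cfun γ₁ = cfun γ₂ →
      ((γ₂ * γ₁⁻¹) ^ Q ^ j) ^ (q - 1) = 1 := by
    intro γ₁ γ₂ h1F h10 h2F h20 hcw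
    have hu₁ : β * γ₁ ≠ 0 := mul_ne_zero hβ h10
    have hu₂ : β * γ₂ ≠ 0 := mul_ne_zero hβ h20
    obtain ⟨ℓδ, hℓδ⟩ := hlinmap2 (Af (β * γ₁) - Af (β * γ₂)) (Bf (β * γ₁) - Bf (β * γ₂))
    have hvan : ∀ i : Fin n, ℓδ (α i) = 0 := by
      intro i
      have hi := congrFun hcw i
      rw [hcfun] at hi
      simp only [] at hi
      rw [hℓδ]
      linear_combination hi
    have hVvan : ∀ x ∈ V₀, ℓδ x = 0 := by
      intro x hx
      have hle : V₀ ≤ LinearMap.ker ℓδ := by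
        rw [hV₀]
        apply Submodule.span_le.2
        rintro _ ⟨i, rfl⟩
        exact LinearMap.mem_ker.2 (hvan i)
      exact LinearMap.mem_ker.1 (hle hx)
    have hFvan : ∀ y ∈ F, (Af (β * γ₁) - Af (β * γ₂)) * β ^ Q ^ j * y ^ Q ^ j
        + (Bf (β * γ₁) - Bf (β * γ₂)) * β ^ Q ^ (j + 1) * y ^ Q ^ (j + 1) = 0 := by
      intro y hy
      have h1 := hVvan (β * y) (hβF y hy)
      rw [hℓδ, mul_pow, mul_pow] at h1
      linear_combination h1
    have hδb : Bf (β * γ₁) - Bf (β * γ₂) = 0 := by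
      by_contra hδb0
      set a' : ℕ → K := fun i => if i = j then (Af (β * γ₁) - Af (β * γ₂)) * β ^ Q ^ j
        else if i = j + 1 then (Bf (β * γ₁) - Bf (β * γ₂)) * β ^ Q ^ (j + 1) else 0 with ha'
      have hsum : ∀ x : K, ∑ i ∈ Finset.range (j + 2), a' i * x ^ Q ^ i
          = (Af (β * γ₁) - Af (β * γ₂)) * β ^ Q ^ j * x ^ Q ^ j
            + (Bf (β * γ₁) - Bf (β * γ₂)) * β ^ Q ^ (j + 1) * x ^ Q ^ (j + 1) := by
        intro x
        rw [Finset.sum_range_succ, Finset.sum_range_succ]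
        have hz : ∀ i ∈ Finset.range j, a' i * x ^ Q ^ i = 0 := by
          intro i hi
          simp only [Finset.mem_range] at hi
          have : a' i = 0 := by
            rw [ha']
            simp only []
            rw [if_neg (by omega), if_neg (by omega)]
          rw [this, zero_mul]
        rw [Finset.sum_congr rfl hz, Finset.sum_const_zero, zero_add]
        have e1 : a' j = (Af (β * γ₁) - Af (β * γ₂)) * β ^ Q ^ j := by
          rw [ha']; simp only []; simp
        have e2 : a' (j + 1) = (Bf (β * γ₁) - Bf (β * γ₂)) * β ^ Q ^ (j + 1) := by
          rw [ha']; simp only []; rw [if_neg (by omega)]; simp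
        rw [e1, e2]
      have htop : a' (j + 1) ≠ 0 := by
        rw [ha']
        simp only []
        rw [if_neg (by omega)]
        simpa using mul_ne_zero hδb0 (pow_ne_zero _ hβ)
      have hb := ore_bound q Q hq2 (by omega) frobQ F (fun x hx => by
          have := hFQmem x hx 1
          rwa [pow_one] at this) hfixcard (j + 1) a' htop
      have hsubset : Ffin ⊆ Finset.univ.filter (fun x : K => x ∈ F ∧
          ∑ i ∈ Finset.range (j + 2), a' i * x ^ Q ^ i = 0) := by
        intro x hx
        rw [hFfin] at hx
        simp only [Finset.mem_filter, Finset.mem_univ, true_and] at hx ⊢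
        exact ⟨hx, by rw [hsum x]; exact hFvan x hx⟩
      have hcard2 := Finset.card_le_card hsubset
      rw [hFcard] at hcard2
      have : q ^ n ≤ q ^ (j + 1) := le_trans hcard2 hb
      have hne : n ≤ j + 1 := (Nat.pow_le_pow_iff_right (by omega)).1 this
      omega
    have hδa : Af (β * γ₁) - Af (β * γ₂) = 0 := by
      have h1 := hFvan 1 F.one_mem
      rw [one_pow, one_pow, hδb] at h1
      have h2 : (Af (β * γ₁) - Af (β * γ₂)) * β ^ Q ^ j = 0 := by linear_combination h1
      rcases mul_eq_zero.1 h2 with h | h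
      · exact h
      · exact absurd h (pow_ne_zero _ hβ)
    -- cross identity
    have hAeq : (β * γ₁) ^ Q ^ (t + j) * ((β * γ₁) ^ Q ^ j)⁻¹
        = (β * γ₂) ^ Q ^ (t + j) * ((β * γ₂) ^ Q ^ j)⁻¹ := by
      have h1 : Af (β * γ₁) = Af (β * γ₂) := by linear_combination hδa
      rw [hAf] at h1
      simp only [] at h1
      exact neg_inj.1 h1
    have hp1 : (β * γ₁) ^ Q ^ j ≠ 0 := pow_ne_zero _ hu₁
    have hp2' : (β * γ₂) ^ Q ^ j ≠ 0 := pow_ne_zero _ hu₂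
    have hcross : (β * γ₁) ^ Q ^ (t + j) * (β * γ₂) ^ Q ^ j
        = (β * γ₂) ^ Q ^ (t + j) * (β * γ₁) ^ Q ^ j := by
      field_simp at hAeq
      linear_combination hAeq
    -- the element z
    set z : K := (γ₂ * γ₁⁻¹) ^ Q ^ j with hzdef
    have hvF : γ₂ * γ₁⁻¹ ∈ F := F.mul_mem h2F (F.inv_mem h1F)
    have hv0 : γ₂ * γ₁⁻¹ ≠ 0 := mul_ne_zero h20 (inv_ne_zero h10)
    have hzF' : z ∈ F := hFQmem _ hvF j
    have hz0 : z ≠ 0 := pow_ne_zero _ hv0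
    have hveq : γ₂ * γ₁⁻¹ = (β * γ₂) * (β * γ₁)⁻¹ := by
      field_simp
    have hzfix : z ^ Q ^ t = z := by
      have h1 : z ^ Q ^ t = (β * γ₂) ^ Q ^ (t + j) * ((β * γ₁) ^ Q ^ (t + j))⁻¹ := by
        rw [hzdef, powQ_mul (γ₂ * γ₁⁻¹) j t, hveq]
        have e : j + t = t + j := by omega
        rw [e, mul_pow, inv_pow]
      have h2 : z = (β * γ₂) ^ Q ^ j * ((β * γ₁) ^ Q ^ j)⁻¹ := by
        rw [hzdef, hveq, mul_pow, inv_pow]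
      rw [h1, h2, ← div_eq_mul_inv, ← div_eq_mul_inv,
        div_eq_div_iff (pow_ne_zero _ hu₁) hp1]
      linear_combination -hcross
    -- order argument
    have hQt2 : 2 ≤ Q ^ t := by
      calc 2 ≤ Q := hQ2
      _ = Q ^ 1 := (pow_one Q).symm
      _ ≤ Q ^ t := Nat.pow_le_pow_right (by omega) (by omega)
    have hd1 : orderOf z ∣ q ^ (s * t) - 1 := by
      have h1 := hordK z hz0 (Q ^ t) hQt2 hzfix
      have e : Q ^ t = q ^ (s * t) := by rw [hQdef, ← pow_mul]
      rwa [e] at h1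
    have hd2 : orderOf z ∣ q ^ n - 1 := by
      apply hordK z hz0 (q ^ n)
      · calc 2 ≤ q := hq2
        _ = q ^ 1 := (pow_one q).symm
        _ ≤ q ^ n := Nat.pow_le_pow_right (by omega) (by omega)
      · exact (hFmem z).1 hzF'
    have htcop : Nat.gcd t n = 1 := by
      have hrw : n = 1 + (t - 1) * t := by rw [hnt]; ring
      rw [hrw, Nat.gcd_add_mul_right_right t 1 (t - 1), Nat.gcd_one_right]
    have hstn : Nat.gcd (s * t) n = 1 := Nat.Coprime.mul hs1 htcop
    have hdvdq : orderOf z ∣ q - 1 :=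
      aux_dvd_q_sub_one hq2 (by positivity) hstn hd1 hd2
    exact orderOf_dvd_iff_pow_eq_one.1 hdvdq
  -- final counting
  set Γfin : Finset K := Ffin.erase 0 with hΓ
  have h0F : (0 : K) ∈ Ffin := by
    rw [hFfin]
    simp only [Finset.mem_filter, Finset.mem_univ, true_and]
    exact F.zero_mem
  have hΓcard : Γfin.card = q ^ n - 1 := by rw [hΓ, Finset.card_erase_of_mem h0F, hFcard]
  have hmemΓ : ∀ γ ∈ Γfin, γ ∈ F ∧ γ ≠ 0 := by
    intro γ hγ
    rw [hΓ, Finset.mem_erase] at hγ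
    refine ⟨?_, hγ.1⟩
    have h1 := hγ.2
    rw [hFfin] at h1
    simpa using h1
  have hfibc : ∀ y ∈ Γfin.image cfun, (Γfin.filter (fun γ => cfun γ = y)).card ≤ q - 1 := by
    intro y hy
    rcases Finset.eq_empty_or_nonempty (Γfin.filter (fun γ => cfun γ = y)) with he | ⟨γ₁, hγ₁⟩
    · rw [he]; simp
    · obtain ⟨hγ₁Γ, hγ₁y⟩ := Finset.mem_filter.1 hγ₁
      obtain ⟨hγ₁F, hγ₁0⟩ := hmemΓ γ₁ hγ₁Γ
      calc (Γfin.filter (fun γ => cfun γ = y)).card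
          ≤ ((Polynomial.nthRoots (q - 1) (1 : K)).toFinset).card := by
            apply Finset.card_le_card_of_injOn (fun γ => (γ * γ₁⁻¹) ^ Q ^ j)
            · intro γ hγ
              obtain ⟨hγΓ, hγy⟩ := Finset.mem_filter.1 hγ
              obtain ⟨hγF, hγ0⟩ := hmemΓ γ hγΓ
              rw [Finset.mem_coe, Multiset.mem_toFinset, Polynomial.mem_nthRoots (by omega)]
              exact hdist γ₁ γ hγ₁F hγ₁0 hγF hγ0 (hγ₁y.trans hγy.symm)
            · intro γa _ γb _ hab
              have h1 : γa * γ₁⁻¹ = γb * γ₁⁻¹ := hpowinj hab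
              exact mul_right_cancel₀ (inv_ne_zero hγ₁0) h1
        _ ≤ q - 1 := le_trans (Multiset.toFinset_card_le _)
            (Polynomial.card_nthRoots (q - 1) (1 : K))
  have hcount := Finset.card_le_mul_card_image Γfin (q - 1) hfibc
  rw [hΓcard] at hcount
  have himgsub : Γfin.image cfun ⊆ (C ∩ ball Fq wvec (n - t)).toFinset := by
    intro y hy
    obtain ⟨γ, hγΓ, rfl⟩ := Finset.mem_image.1 hy
    obtain ⟨hγF, hγ0⟩ := hmemΓ γ hγΓ
    rw [Set.mem_toFinset]
    exact ⟨hcwC γ, hballmem γ hγF hγ0⟩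
  have himgle := Finset.card_le_card himgsub
  have hN : Nat.card ↥(C ∩ ball Fq wvec (n - t)) = (C ∩ ball Fq wvec (n - t)).toFinset.card := by
    rw [Nat.card_coe_set_eq, Set.ncard_eq_toFinset_card']
  have hfinal : (q ^ n - 1) / (q - 1) ≤ Nat.card ↥(C ∩ ball Fq wvec (n - t)) := by
    have h4 : q ^ n - 1 ≤ (q - 1) * (C ∩ ball Fq wvec (n - t)).toFinset.card :=
      le_trans hcount (Nat.mul_le_mul_left _ himgle)
    have h5 : (q ^ n - 1) / (q - 1)
        ≤ ((q - 1) * (C ∩ ball Fq wvec (n - t)).toFinset.card) / (q - 1) :=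
      Nat.div_le_div_right h4
    rw [Nat.mul_div_cancel_left _ (by omega : 0 < q - 1)] at h5
    rw [hN]
    exact h5
  have himg2 : 2 ≤ (Γfin.image cfun).card := by
    have h6 : 2 * q ≤ q * q := Nat.mul_le_mul_right q hq2
    have h7 : q * q ≤ q ^ n := by
      have h8 : q ^ 2 ≤ q ^ n := Nat.pow_le_pow_right (by omega) (by omega)
      rwa [pow_two] at h8
    by_contra hcon
    push_neg at hcon
    have h8 : (q - 1) * (Γfin.image cfun).card ≤ (q - 1) * 1 :=
      Nat.mul_le_mul_left _ (by omega)
    omega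
  refine ⟨wvec, ?_, hfinal⟩
  intro hwC
  obtain ⟨y, hy, hyne⟩ : ∃ y ∈ Γfin.image cfun, y ≠ wvec := by
    by_contra hcon
    push_neg at hcon
    have h9 : (Γfin.image cfun).card ≤ 1 :=
      Finset.card_le_one.2 (fun a ha b hb => (hcon a ha).trans (hcon b hb).symm)
    omega
  obtain ⟨γ, hγΓ, rfl⟩ := Finset.mem_image.1 hy
  obtain ⟨hγF, hγ0⟩ := hmemΓ γ hγΓ
  have hball2 : rkw Fq (wvec - cfun γ) ≤ n - t := hballmem γ hγF hγ0
  have hmin : minDist Fq C ≤ rkw Fq (wvec - cfun γ) :=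
    Nat.sInf_le ⟨wvec, hwC, cfun γ, hcwC γ, fun h => hyne h.symm, rfl⟩
  have hdle : d ≤ n - t := by
    rw [hd]
    exact le_trans hmin hball2
  omega
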